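/- Let X be a real Banach space, F a norming subspace of X*, and σ the σ(X,F) topology. If K ⊆ X is a σ-closed, norm-bounded, convex set that is not admissible, then there exists λ > 0 such that the σ-closure of K + λB(X) (where B(X) is the closed unit ball of X) is not admissible and has nonempty norm interior. -/

import Mathlib

open Metric Set Pointwise

/-- A set is admissible if it is the intersection of all closed balls containing it. -/
def Admissible {X : Type*} [NormedAddCommGroup X] (K : Set X) : Prop :=
  K = ⋂ p ∈ {p : X × ℝ | K ⊆ closedBall p.1 p.2}, closedBall p.1 p.2

/-- The `σ(X,F)` topology on `X`: the topology induced by the functionals in `F`. -/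
def sigmaTop {X : Type*} [NormedAddCommGroup X] [NormedSpace ℝ X]
    (F : Submodule ℝ (X →L[ℝ] ℝ)) : TopologicalSpace X :=
  TopologicalSpace.induced (fun x => fun f : F => (f : X →L[ℝ] ℝ) x) inferInstance

/-- `F` is a norming subspace of `X*`: `‖x‖ = sup {|f x| : f ∈ F, ‖f‖ ≤ 1}`. -/
def IsNorming {X : Type*} [NormedAddCommGroup X] [NormedSpace ℝ X]
    (F : Submodule ℝ (X →L[ℝ] ℝ)) : Prop :=
  ∀ x : X, ‖x‖ = sSup {r : ℝ | ∃ f ∈ F, ‖f‖ ≤ 1 ∧ r = |f x|}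

def pairingB {X : Type*} [NormedAddCommGroup X] [NormedSpace ℝ X]
    (F : Submodule ℝ (X →L[ℝ] ℝ)) : X →ₗ[ℝ] (↥F →ₗ[ℝ] ℝ) where
  toFun x :=
    { toFun := fun f => (f : X →L[ℝ] ℝ) x
      map_add' := fun f g => rfl
      map_smul' := fun c f => rfl }
  map_add' x y := by ext f; exact (f : X →L[ℝ] ℝ).map_add x y
  map_smul' c x := by ext f; exact (f : X →L[ℝ] ℝ).map_smul c x

lemma admissible_empty {X : Type*} [NormedAddCommGroup X] : Admissible (∅ : Set X) := by
  unfold Admissible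
  apply Subset.antisymm (empty_subset _)
  intro x hx
  simp only [mem_iInter, mem_setOf_eq] at hx
  have := hx ((0 : X), (-1 : ℝ)) (empty_subset _)
  rw [closedBall_eq_empty.2 (by norm_num)] at this
  exact this

lemma closure_minimal' {α : Type*} (t : TopologicalSpace α) {s u : Set α}
    (h : s ⊆ u) (hc : @IsClosed α t u) : @closure α t s ⊆ u := by
  letI := t; exact closure_minimal h hc

lemma subset_closure' {α : Type*} (t : TopologicalSpace α) (s : Set α) :
    s ⊆ @closure α t s := by
  letI := t; exact subset_closure

/-- Remark r1: a σ-closed bounded convex inadmissible set gives rise to an inadmissible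
set of the form `K_λ` with nonempty norm interior. -/
theorem stmt_1 {X : Type*} [NormedAddCommGroup X] [NormedSpace ℝ X] [CompleteSpace X]
    (F : Submodule ℝ (X →L[ℝ] ℝ)) (hF : IsNorming F)
    (K : Set X) (hKc : @IsClosed X (sigmaTop F) K)
    (hKb : Bornology.IsBounded K) (hKconv : Convex ℝ K)
    (hKnadm : ¬ Admissible K) :
    ∃ l : ℝ, 0 < l ∧
      ¬ Admissible (@closure X (sigmaTop F) (K + closedBall (0 : X) l)) ∧
      (interior (@closure X (sigmaTop F) (K + closedBall (0 : X) l))).Nonempty := by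
  -- K is nonempty
  have hKne : K.Nonempty := by
    rcases K.eq_empty_or_nonempty with h | h
    · exact absurd (h ▸ admissible_empty) hKnadm
    · exact h
  obtain ⟨k₀, hk₀⟩ := hKne
  -- extract a point x₀ in all balls containing K but not in K
  have hsub : K ⊆ ⋂ p ∈ {p : X × ℝ | K ⊆ closedBall p.1 p.2}, closedBall p.1 p.2 := by
    intro x hx
    simp only [mem_iInter, mem_setOf_eq]
    exact fun p hp => hp hx
  have : ¬ (⋂ p ∈ {p : X × ℝ | K ⊆ closedBall p.1 p.2}, closedBall p.1 p.2) ⊆ K := by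
    intro h
    exact hKnadm (Subset.antisymm hsub h)
  obtain ⟨x₀, hx₀mem, hx₀K⟩ := not_subset.mp this
  -- separation via the weak topology
  have hclosed : @IsClosed (WeakBilin (pairingB F)) _ K := hKc
  have hconv : Convex ℝ (K : Set (WeakBilin (pairingB F))) := hKconv
  haveI : IsTopologicalAddGroup (WeakBilin (pairingB F)) :=
    @WeakBilin.instIsTopologicalAddGroup ℝ X F _ _ _ _ _ _ (pairingB F) _
  haveI : LocallyConvexSpace ℝ (WeakBilin (pairingB F)) :=
    @WeakBilin.locallyConvexSpace ℝ X F _ _ _ _ _ _ _ _ (pairingB F)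
  obtain ⟨f, u, hfK, hfx₀⟩ :=
    geometric_hahn_banach_closed_point (E := WeakBilin (pairingB F)) hconv hclosed hx₀K
  -- f is norm-continuous
  have hcont : Continuous (fun x : X => fun f : F => (f : X →L[ℝ] ℝ) x) :=
    continuous_pi fun f => (f : X →L[ℝ] ℝ).continuous
  have hle : (inferInstance : TopologicalSpace X) ≤ sigmaTop F :=
    continuous_iff_le_induced.mp hcont
  have hgc : @Continuous X ℝ UniformSpace.toTopologicalSpace UniformSpace.toTopologicalSpace
      (fun x : X => f x) := by
    rw [continuous_iff_le_induced]
    exact le_trans hle (continuous_iff_le_induced.mp f.continuous)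
  let g : X →L[ℝ] ℝ := { toLinearMap := f.toLinearMap, cont := by exact hgc }
  have hgf : ∀ x : X, g x = f x := fun x => rfl
  set M : ℝ := ‖g‖ with hM
  have hM0 : 0 ≤ M := norm_nonneg g
  have hux : 0 < f x₀ - u := by linarith
  set l : ℝ := (f x₀ - u) / (2 * (M + 1)) with hl
  have hl0 : 0 < l := by positivity
  refine ⟨l, hl0, ?_, ?_⟩
  · -- not admissible
    set C := @closure X (sigmaTop F) (K + closedBall (0 : X) l) with hC
    -- C is contained in the σ-closed half-space {f ≤ u + l * M}
    have hhalf : @IsClosed X (sigmaTop F) {z : X | f z ≤ u + l * M} := by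
      have hfc : @Continuous X ℝ (sigmaTop F) _ (⇑f) := f.continuous
      exact @IsClosed.preimage X ℝ (sigmaTop F) _ _ hfc _ isClosed_Iic
    have hsubhalf : K + closedBall (0 : X) l ⊆ {z : X | f z ≤ u + l * M} := by
      rintro x hx
      rw [Set.mem_add] at hx
      obtain ⟨k, hk, b, hb, rfl⟩ := hx
      have h1 : f k < u := hfK k hk
      have h2 : f b ≤ M * l := by
        have := g.le_opNorm b
        rw [mem_closedBall_zero_iff] at hb
        calc f b = g b := (hgf b).symm
          _ ≤ |g b| := le_abs_self _
          _ = ‖g b‖ := rfl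
          _ ≤ ‖g‖ * ‖b‖ := g.le_opNorm b
          _ ≤ M * l := by
              apply mul_le_mul le_rfl hb (norm_nonneg b) hM0
      have : f (k + b) = f k + f b := map_add f k b
      rw [mem_setOf_eq, this]
      nlinarith
    have hCsub : C ⊆ {z : X | f z ≤ u + l * M} :=
      closure_minimal' (sigmaTop F) hsubhalf hhalf
    have hx₀C : x₀ ∉ C := by
      intro h
      have hb : f x₀ ≤ u + l * M := hCsub h
      have hlM : l * M < f x₀ - u := by
        rw [hl]
        rw [div_mul_eq_mul_div, div_lt_iff₀ (by positivity)]
        nlinarith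
      linarith
    -- but x₀ is in every closed ball containing C
    have hKsubC : K ⊆ C := by
      intro x hx
      have : x ∈ K + closedBall (0 : X) l := by
        rw [Set.mem_add]
        exact ⟨x, hx, 0, mem_closedBall_self hl0.le, add_zero x⟩
      exact subset_closure' (sigmaTop F) _ this
    intro hadm
    have : x₀ ∈ C := by
      rw [hadm]
      simp only [mem_iInter, mem_setOf_eq]
      intro p hp
      simp only [mem_iInter, mem_setOf_eq] at hx₀mem
      exact hx₀mem p (hKsubC.trans hp)
    exact hx₀C this
  · -- nonempty interior
    refine ⟨k₀, ?_⟩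
    have hball : ball k₀ l ⊆ K + closedBall (0 : X) l := by
      intro y hy
      rw [Set.mem_add]
      refine ⟨k₀, hk₀, y - k₀, ?_, by abel⟩
      rw [mem_closedBall_zero_iff]
      exact (mem_ball_iff_norm.mp hy).le
    have hsub2 : ball k₀ l ⊆ @closure X (sigmaTop F) (K + closedBall (0 : X) l) :=
      hball.trans (subset_closure' (sigmaTop F) _)
    exact interior_maximal hsub2 isOpen_ball (mem_ball_self hl0)
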